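/- Trajectory-based optimization with m-th derivative objective for the linear model: let γ > 0, m ≥ 1, t₀ < t_f, β ∈ ℝ. Among all solutions z of the linear model with z₂(t_f) = β, the functional ∫_{t₀}^{t_f} ‖∂_t^m z(t)‖₂² dt attains a unique minimum, and the minimizer satisfies z₁(t_f) = β·[1 + (2e^{−2γt_f}e^{−2t_f} − 2e^{−2γt_f}e^{−2t₀})/(e^{−2γt_f}e^{−2t₀} − e^{−2γt_f}e^{−2t_f} − ξ·e^{−2(1+γ)t₀} + ξ·e^{−2(1+γ)t_f})] with ξ = (−1−γ)^{2m−1}. Consequently z₁(t_f) → β in each of the three limits m → ∞ (γ, t₀, t_f, β fixed), t₀ → −∞ (γ, m, t_f, β fixed), and γ → ∞ (m, t₀ < t_f, β fixed). -/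

import Mathlib

open Real Filter

/-- The functional ∫_{t₀}^{t_f} ‖∂_t^m z(t)‖₂² dt evaluated on the general solution
of the linear model with constants c₁, c₂. -/
noncomputable def mDerivFunctional (γ t₀ tf : ℝ) (m : ℕ) (c₁ c₂ : ℝ) : ℝ :=
  ∫ t in t₀..tf,
    ((iteratedDeriv m (fun s => c₁ * Real.exp (-s) + c₂ * Real.exp ((-1 - γ) * s)) t) ^ 2
      + (iteratedDeriv m (fun s => c₁ * Real.exp (-s) - c₂ * Real.exp ((-1 - γ) * s)) t) ^ 2)

/-- The error factor χ with ξ = (−1−γ)^{2m−1}, so that the optimal point of interest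
is z₁(t_f) = β·(1 + χ). -/
noncomputable def chi17 (γ t₀ tf : ℝ) (m : ℕ) : ℝ :=
  (2 * Real.exp (-2 * γ * tf) * Real.exp (-2 * tf)
      - 2 * Real.exp (-2 * γ * tf) * Real.exp (-2 * t₀))
    / (Real.exp (-2 * γ * tf) * Real.exp (-2 * t₀)
        - Real.exp (-2 * γ * tf) * Real.exp (-2 * tf)
        - (-1 - γ) ^ (2 * m - 1) * Real.exp ((-1 - γ) * (2 * t₀))
        + (-1 - γ) ^ (2 * m - 1) * Real.exp ((-1 - γ) * (2 * tf)))

lemma iterDeriv_two_exp (c₁ c₂ a b : ℝ) (m : ℕ) :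
    iteratedDeriv m (fun s => c₁ * Real.exp (a*s) + c₂ * Real.exp (b*s)) =
      fun t => c₁ * a^m * Real.exp (a*t) + c₂ * b^m * Real.exp (b*t) := by
  induction m with
  | zero => funext t; simp
  | succ n ih =>
    rw [iteratedDeriv_succ, ih]
    funext t
    have ha : HasDerivAt (fun t : ℝ => a * t) a t := by
      simpa using (hasDerivAt_id t).const_mul a
    have hb : HasDerivAt (fun t : ℝ => b * t) b t := by
      simpa using (hasDerivAt_id t).const_mul b
    have h1 : HasDerivAt (fun t => c₁ * a^n * Real.exp (a*t) + c₂ * b^n * Real.exp (b*t))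
        (c₁ * a^n * (Real.exp (a*t) * a) + c₂ * b^n * (Real.exp (b*t) * b)) t :=
      (ha.exp.const_mul _).add (hb.exp.const_mul _)
    rw [h1.deriv]; ring

lemma integral_exp_mul' (k a b : ℝ) (hk : k ≠ 0) :
    ∫ t in a..b, Real.exp (k*t) = (Real.exp (k*b) - Real.exp (k*a)) / k := by
  have h : ∀ t ∈ Set.uIcc a b, HasDerivAt (fun t => Real.exp (k*t) / k) (Real.exp (k*t)) t := by
    intro t _
    have hk' : HasDerivAt (fun t : ℝ => k * t) k t := by
      simpa using (hasDerivAt_id t).const_mul k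
    have h2 := hk'.exp.div_const k
    exact h2.congr_deriv (mul_div_cancel_right₀ _ hk)
  rw [intervalIntegral.integral_eq_sub_of_hasDerivAt h
    ((Real.continuous_exp.comp (continuous_const.mul continuous_id)).intervalIntegrable a b)]
  ring

lemma key17 (γ : ℝ) (hγ : 0 < γ) (m : ℕ) (hm : 1 ≤ m) (t₀ tf c₁ c₂ : ℝ) :
    mDerivFunctional γ t₀ tf m c₁ c₂ =
      c₁^2 * (Real.exp (-2*t₀) - Real.exp (-2*tf))
      + c₂^2 * ((-1-γ)^(2*m-1) * (Real.exp ((-1-γ)*(2*tf)) - Real.exp ((-1-γ)*(2*t₀)))) := by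
  have hL : (-1-γ) ≠ 0 := by linarith
  have e1 : (fun s => c₁ * Real.exp (-s) + c₂ * Real.exp ((-1-γ)*s))
      = (fun s => c₁ * Real.exp ((-1)*s) + c₂ * Real.exp ((-1-γ)*s)) := by
    funext s; norm_num
  have e2 : (fun s => c₁ * Real.exp (-s) - c₂ * Real.exp ((-1-γ)*s))
      = (fun s => c₁ * Real.exp ((-1)*s) + (-c₂) * Real.exp ((-1-γ)*s)) := by
    funext s; ring_nf
  unfold mDerivFunctional
  rw [e1, e2, iterDeriv_two_exp, iterDeriv_two_exp]
  have hpt : ∀ t : ℝ,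
      (c₁ * (-1:ℝ)^m * Real.exp ((-1)*t) + c₂ * (-1-γ)^m * Real.exp ((-1-γ)*t))^2
      + (c₁ * (-1:ℝ)^m * Real.exp ((-1)*t) + (-c₂) * (-1-γ)^m * Real.exp ((-1-γ)*t))^2
      = (2*c₁^2) * Real.exp ((-2)*t) + (2*c₂^2*(-1-γ)^(2*m)) * Real.exp ((2*(-1-γ))*t) := by
    intro t
    have A1 : ((-1:ℝ)^m)^2 * Real.exp ((-1)*t)^2 = Real.exp ((-2)*t) := by
      rw [← pow_mul, mul_comm m 2, pow_mul, sq (Real.exp _), ← Real.exp_add]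
      ring_nf
    have A2 : (((-1-γ))^m)^2 * Real.exp ((-1-γ)*t)^2
        = (-1-γ)^(2*m) * Real.exp ((2*(-1-γ))*t) := by
      rw [← pow_mul, mul_comm m 2, sq (Real.exp _), ← Real.exp_add]
      ring_nf
    linear_combination 2*c₁^2 * A1 + 2*c₂^2 * A2
  simp only [hpt]
  have i1 : IntervalIntegrable (fun t => (2*c₁^2) * Real.exp ((-2)*t)) MeasureTheory.volume t₀ tf :=
    (Continuous.intervalIntegrable (by continuity) t₀ tf)
  have i2 : IntervalIntegrable (fun t => (2*c₂^2*(-1-γ)^(2*m)) * Real.exp ((2*(-1-γ))*t)) MeasureTheory.volume t₀ tf :=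
    (Continuous.intervalIntegrable (by continuity) t₀ tf)
  rw [intervalIntegral.integral_add i1 i2, intervalIntegral.integral_const_mul,
    intervalIntegral.integral_const_mul, integral_exp_mul' _ _ _ (by norm_num : (-2:ℝ) ≠ 0),
    integral_exp_mul' _ _ _ (by positivity : (2*(-1-γ)) ≠ 0)]
  have hpow : (-1-γ)^(2*m) = (-1-γ)^(2*m-1) * (-1-γ) := by
    rw [← pow_succ]
    congr 1
    omega
  rw [hpow]
  have h1 : Real.exp ((-1-γ)*(2*tf)) = Real.exp (2*(-1-γ)*tf) := by ring_nf
  have h2 : Real.exp ((-1-γ)*(2*t₀)) = Real.exp (2*(-1-γ)*t₀) := by ring_nf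
  rw [h1, h2]
  field_simp
  ring

set_option maxHeartbeats 1000000 in
/-- Trajectory-based optimization with m-th derivative objective for
the linear model: among all solutions with z₂(t_f) = β the functional
∫_{t₀}^{t_f} ‖∂_t^m z‖₂² dt attains a unique minimum, the minimizer satisfies
z₁(t_f) = β·(1 + χ) with χ as in `chi17`, and z₁(t_f) → β in each of the limits
m → ∞, t₀ → −∞, γ → ∞. -/
theorem stmt17 (γ : ℝ) (hγ : 0 < γ) (m : ℕ) (hm : 1 ≤ m) (t₀ tf β : ℝ)
    (ht : t₀ < tf) :
    (∃ d₁ d₂ : ℝ,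
      d₁ * exp (-tf) - d₂ * exp ((-1 - γ) * tf) = β ∧
      (∀ c₁ c₂ : ℝ, c₁ * exp (-tf) - c₂ * exp ((-1 - γ) * tf) = β →
        mDerivFunctional γ t₀ tf m d₁ d₂ ≤ mDerivFunctional γ t₀ tf m c₁ c₂ ∧
        (mDerivFunctional γ t₀ tf m c₁ c₂ = mDerivFunctional γ t₀ tf m d₁ d₂ →
          c₁ = d₁ ∧ c₂ = d₂)) ∧
      d₁ * exp (-tf) + d₂ * exp ((-1 - γ) * tf) = β * (1 + chi17 γ t₀ tf m)) ∧
    Tendsto (fun k : ℕ => β * (1 + chi17 γ t₀ tf k)) atTop (nhds β) ∧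
    Tendsto (fun s : ℝ => β * (1 + chi17 γ s tf m)) atBot (nhds β) ∧
    Tendsto (fun g : ℝ => β * (1 + chi17 g t₀ tf m)) atTop (nhds β) := by
  constructor
  · -- existence of the minimizer
    set A : ℝ := Real.exp (-2*t₀) - Real.exp (-2*tf) with hAdef
    set B : ℝ := (-1-γ)^(2*m-1) * (Real.exp ((-1-γ)*(2*tf)) - Real.exp ((-1-γ)*(2*t₀))) with hBdef
    have hξ : (-1-γ)^(2*m-1) < 0 := Odd.pow_neg ⟨m-1, by omega⟩ (by linarith)
    have hA : 0 < A := by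
      have : Real.exp (-2*tf) < Real.exp (-2*t₀) := Real.exp_lt_exp.mpr (by linarith)
      rw [hAdef]; linarith
    have hB : 0 < B := by
      have h1 : Real.exp ((-1-γ)*(2*tf)) < Real.exp ((-1-γ)*(2*t₀)) := by
        apply Real.exp_lt_exp.mpr
        nlinarith
      exact mul_pos_of_neg_of_neg hξ (by linarith)
    set u : ℝ := Real.exp (-tf) with hudef
    set v : ℝ := Real.exp ((-1-γ)*tf) with hvdef
    set S : ℝ := u^2*B + v^2*A with hSdef
    have hu : 0 < u := Real.exp_pos _
    have hv : 0 < v := Real.exp_pos _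
    have hS : 0 < S := by positivity
    set d₁ : ℝ := β*u*B/S with hd1def
    set d₂ : ℝ := -(β*v*A)/S with hd2def
    refine ⟨d₁, d₂, ?_, ?_, ?_⟩
    · rw [hd1def, hd2def, hSdef]; field_simp; ring
    · intro c₁ c₂ hc
      have hFc : c₁^2*A + c₂^2*B
          = (d₁^2*A + d₂^2*B) + A*(c₁-d₁)^2 + B*(c₂-d₂)^2 := by
        rw [hd1def, hd2def, hSdef]
        field_simp
        linear_combination (2*β*A*B*(u^2*B + v^2*A)) * hc
      rw [key17 γ hγ m hm t₀ tf c₁ c₂, key17 γ hγ m hm t₀ tf]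
      rw [← hAdef, ← hBdef]
      constructor
      · nlinarith [sq_nonneg (c₁-d₁), sq_nonneg (c₂-d₂)]
      · intro heq
        have h1 : (c₁-d₁)^2 = 0 := by nlinarith [sq_nonneg (c₁-d₁), sq_nonneg (c₂-d₂)]
        have h2 : (c₂-d₂)^2 = 0 := by nlinarith [sq_nonneg (c₁-d₁), sq_nonneg (c₂-d₂)]
        constructor
        · have := pow_eq_zero_iff (n := 2) (by norm_num) |>.mp h1
          linarith
        · have := pow_eq_zero_iff (n := 2) (by norm_num) |>.mp h2
          linarith
    · -- value formula
      set ξ : ℝ := (-1-γ)^(2*m-1) with hξdef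
      set N : ℝ := 2 * Real.exp (-2 * γ * tf) * Real.exp (-2 * tf)
          - 2 * Real.exp (-2 * γ * tf) * Real.exp (-2 * t₀) with hNdef
      set D : ℝ := Real.exp (-2 * γ * tf) * Real.exp (-2 * t₀)
          - Real.exp (-2 * γ * tf) * Real.exp (-2 * tf)
          - ξ * Real.exp ((-1 - γ) * (2 * t₀))
          + ξ * Real.exp ((-1 - γ) * (2 * tf)) with hDdef
      have hchi : chi17 γ t₀ tf m = N / D := by rw [chi17, hNdef, hDdef, hξdef]
      have a1 : Real.exp (-2*t₀) = Real.exp (-t₀)^2 := by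
        rw [sq, ← Real.exp_add]; ring_nf
      have a2 : Real.exp (-2*tf) = Real.exp (-tf)^2 := by
        rw [sq, ← Real.exp_add]; ring_nf
      have a3 : Real.exp (-2*γ*tf) = Real.exp (-(γ*tf))^2 := by
        rw [sq, ← Real.exp_add]; ring_nf
      have a4 : Real.exp ((-1-γ)*(2*t₀)) = Real.exp (-t₀)^2 * Real.exp (-(γ*t₀))^2 := by
        rw [sq, sq, ← Real.exp_add, ← Real.exp_add, ← Real.exp_add]; ring_nf
      have a5 : Real.exp ((-1-γ)*(2*tf)) = Real.exp (-tf)^2 * Real.exp (-(γ*tf))^2 := by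
        rw [sq, sq, ← Real.exp_add, ← Real.exp_add, ← Real.exp_add]; ring_nf
      have a6 : Real.exp ((-1-γ)*tf) = Real.exp (-tf) * Real.exp (-(γ*tf)) := by
        rw [← Real.exp_add]; ring_nf
      have hSq : S = Real.exp (-tf)^2 * D := by
        rw [hSdef, hDdef, hAdef, hBdef, hudef, hvdef, a1, a2, a3, a4, a5, a6]
        ring
      have hD : 0 < D := by
        have hq2 : (0:ℝ) < Real.exp (-tf)^2 := by positivity
        nlinarith [hS, hSq]
      rw [hchi]
      have h1p : 1 + N / D = (D + N) / D := by
        rw [add_div, div_self hD.ne']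
      rw [h1p]
      rw [hd1def, hd2def, div_mul_eq_mul_div, div_mul_eq_mul_div, ← add_div]
      rw [← mul_div_assoc, div_eq_div_iff hS.ne' hD.ne']
      rw [hSdef, hDdef, hNdef, hAdef, hBdef, hudef, hvdef,
        a1, a2, a3, a4, a5, a6]
      ring
  · -- the three limits
    have hcomb : ∀ {α : Type} {l : Filter α} (f : α → ℝ),
        Tendsto f l (nhds 0) → Tendsto (fun x => β * (1 + f x)) l (nhds β) := by
      intro α l f hf
      have h1 : Tendsto (fun x => β * (1 + f x)) l (nhds (β * (1 + 0))) :=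
        (tendsto_const_nhds.add hf).const_mul β
      simpa using h1
    refine ⟨hcomb _ ?_, hcomb _ ?_, hcomb _ ?_⟩
    · -- m → ∞
      have hQ : (0:ℝ) < Real.exp ((-1-γ)*(2*t₀)) - Real.exp ((-1-γ)*(2*tf)) := by
        have h := Real.exp_lt_exp.mpr (show (-1-γ)*(2*tf) < (-1-γ)*(2*t₀) by nlinarith)
        linarith
      have hpow : Tendsto (fun k : ℕ => (1+γ)^(2*k-1)) atTop atTop := by
        refine tendsto_atTop_mono (fun k => ?_)
          (tendsto_pow_atTop_atTop_of_one_lt (by linarith : (1:ℝ) < 1+γ))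
        exact pow_le_pow_right₀ (by linarith) (by omega)
      have hden : Tendsto (fun k : ℕ =>
          Real.exp (-2*γ*tf) * Real.exp (-2*t₀) - Real.exp (-2*γ*tf) * Real.exp (-2*tf)
          + (1+γ)^(2*k-1) * (Real.exp ((-1-γ)*(2*t₀)) - Real.exp ((-1-γ)*(2*tf)))) atTop atTop :=
        tendsto_atTop_add_const_left _ _ (hpow.atTop_mul_const hQ)
      have hlim := Filter.Tendsto.div_atTop
        (tendsto_const_nhds (x := 2 * Real.exp (-2*γ*tf) * Real.exp (-2*tf)
          - 2 * Real.exp (-2*γ*tf) * Real.exp (-2*t₀)) (f := (atTop : Filter ℕ))) hden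
      refine Filter.Tendsto.congr' ?_ hlim
      filter_upwards [eventually_ge_atTop 1] with k hk
      unfold chi17
      have hodd : Odd (2*k-1) := ⟨k-1, by omega⟩
      have hneg : ((-1:ℝ)-γ) = -(1+γ) := by ring
      rw [hneg, hodd.neg_pow]
      rw [show (-(1+γ)) * (2*t₀) = (-1-γ)*(2*t₀) by ring,
        show (-(1+γ)) * (2*tf) = (-1-γ)*(2*tf) by ring]
      congr 1
      ring
    · -- t₀ → -∞
      set ξ : ℝ := (-1-γ)^(2*m-1) with hξdef
      have hξ : ξ < 0 := Odd.pow_neg ⟨m-1, by omega⟩ (by linarith)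
      have hexp2 : Tendsto (fun s : ℝ => Real.exp (2*s)) atBot (nhds 0) :=
        Real.tendsto_exp_atBot.comp (Tendsto.const_mul_atBot (by norm_num : (0:ℝ) < 2) tendsto_id)
      have hnum : Tendsto (fun s : ℝ =>
          2*Real.exp (-2*γ*tf)*Real.exp (-2*tf)*Real.exp (2*s) - 2*Real.exp (-2*γ*tf))
          atBot (nhds ((2*Real.exp (-2*γ*tf)*Real.exp (-2*tf)) * 0 - 2*Real.exp (-2*γ*tf))) :=
        (hexp2.const_mul _).sub tendsto_const_nhds
      have hexpg : Tendsto (fun s : ℝ => Real.exp (-2*γ*s)) atBot atTop :=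
        Real.tendsto_exp_atTop.comp
          (Tendsto.const_mul_atBot_of_neg (by nlinarith : -2*γ < 0) tendsto_id)
      have hden : Tendsto (fun s : ℝ =>
          (-ξ)*Real.exp (-2*γ*s)
          + (Real.exp (-2*γ*tf)
            + (ξ*Real.exp ((-1-γ)*(2*tf)) - Real.exp (-2*γ*tf)*Real.exp (-2*tf))*Real.exp (2*s)))
          atBot atTop :=
        Filter.Tendsto.atTop_add (hexpg.const_mul_atTop (by linarith : (0:ℝ) < -ξ))
          (tendsto_const_nhds.add (hexp2.const_mul _))
      have hpt : (fun s : ℝ => chi17 γ s tf m) = fun s =>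
          (2*Real.exp (-2*γ*tf)*Real.exp (-2*tf)*Real.exp (2*s) - 2*Real.exp (-2*γ*tf))
          / ((-ξ)*Real.exp (-2*γ*s)
            + (Real.exp (-2*γ*tf)
              + (ξ*Real.exp ((-1-γ)*(2*tf)) - Real.exp (-2*γ*tf)*Real.exp (-2*tf))*Real.exp (2*s))) := by
        funext s
        have i1 : Real.exp (-2*s) * Real.exp (2*s) = 1 := by
          rw [← Real.exp_add, show (-2*s) + 2*s = 0 by ring, Real.exp_zero]
        have i2 : Real.exp ((-1-γ)*(2*s)) * Real.exp (2*s) = Real.exp (-2*γ*s) := by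
          rw [← Real.exp_add]; congr 1; ring
        have e1 : (2 * Real.exp (-2 * γ * tf) * Real.exp (-2 * tf)
            - 2 * Real.exp (-2 * γ * tf) * Real.exp (-2 * s)) * Real.exp (2*s)
            = 2*Real.exp (-2*γ*tf)*Real.exp (-2*tf)*Real.exp (2*s) - 2*Real.exp (-2*γ*tf) := by
          linear_combination (-2*Real.exp (-2*γ*tf)) * i1
        have e2 : (Real.exp (-2 * γ * tf) * Real.exp (-2 * s)
            - Real.exp (-2 * γ * tf) * Real.exp (-2 * tf)
            - ξ * Real.exp ((-1 - γ) * (2 * s))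
            + ξ * Real.exp ((-1 - γ) * (2 * tf))) * Real.exp (2*s)
            = (-ξ)*Real.exp (-2*γ*s)
            + (Real.exp (-2*γ*tf)
              + (ξ*Real.exp ((-1-γ)*(2*tf)) - Real.exp (-2*γ*tf)*Real.exp (-2*tf))*Real.exp (2*s)) := by
          linear_combination Real.exp (-2*γ*tf) * i1 - ξ * i2
        rw [chi17, ← hξdef, ← e1, ← e2, mul_div_mul_right _ _ (Real.exp_ne_zero (2*s))]
      rw [hpt]
      exact hnum.div_atTop hden
    · -- γ → ∞
      have hodd : Odd (2*m-1) := ⟨m-1, by omega⟩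
      have hpow : Tendsto (fun g : ℝ => (1+g)^(2*m-1)) atTop atTop :=
        (tendsto_pow_atTop (by omega : 2*m-1 ≠ 0)).comp
          (tendsto_atTop_add_const_left _ 1 tendsto_id)
      have hex : Tendsto (fun g : ℝ => Real.exp (2*(tf-t₀)*g + -2*t₀) - Real.exp (-2*tf))
          atTop atTop :=
        tendsto_atTop_add_const_right _ _ (Real.tendsto_exp_atTop.comp
          (tendsto_atTop_add_const_right _ _
            (Tendsto.const_mul_atTop (by linarith : (0:ℝ) < 2*(tf-t₀)) tendsto_id)))
      have hden : Tendsto (fun g : ℝ =>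
          (1+g)^(2*m-1) * (Real.exp (2*(tf-t₀)*g + -2*t₀) - Real.exp (-2*tf))
          + (Real.exp (-2*t₀) - Real.exp (-2*tf))) atTop atTop :=
        tendsto_atTop_add_const_right _ _ (hpow.atTop_mul_atTop₀ hex)
      have hpt : (fun g : ℝ => chi17 g t₀ tf m) = fun g =>
          (2*Real.exp (-2*tf) - 2*Real.exp (-2*t₀))
          / ((1+g)^(2*m-1) * (Real.exp (2*(tf-t₀)*g + -2*t₀) - Real.exp (-2*tf))
            + (Real.exp (-2*t₀) - Real.exp (-2*tf))) := by
        funext g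
        have i3 : Real.exp (-2*g*tf) * Real.exp (2*g*tf) = 1 := by
          rw [← Real.exp_add, show (-2*g*tf) + 2*g*tf = 0 by ring, Real.exp_zero]
        have i4 : Real.exp ((-1-g)*(2*t₀)) * Real.exp (2*g*tf)
            = Real.exp (2*(tf-t₀)*g + -2*t₀) := by
          rw [← Real.exp_add]; congr 1; ring
        have i5 : Real.exp ((-1-g)*(2*tf)) * Real.exp (2*g*tf) = Real.exp (-2*tf) := by
          rw [← Real.exp_add]; congr 1; ring
        have hx : ((-1:ℝ)-g)^(2*m-1) = -((1+g)^(2*m-1)) := by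
          rw [show ((-1:ℝ)-g) = -(1+g) by ring, hodd.neg_pow]
        have e1 : (2 * Real.exp (-2 * g * tf) * Real.exp (-2 * tf)
            - 2 * Real.exp (-2 * g * tf) * Real.exp (-2 * t₀)) * Real.exp (2*g*tf)
            = 2*Real.exp (-2*tf) - 2*Real.exp (-2*t₀) := by
          linear_combination (2*Real.exp (-2*tf) - 2*Real.exp (-2*t₀)) * i3
        have e2 : (Real.exp (-2 * g * tf) * Real.exp (-2 * t₀)
            - Real.exp (-2 * g * tf) * Real.exp (-2 * tf)
            - (-1 - g)^(2*m-1) * Real.exp ((-1 - g) * (2 * t₀))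
            + (-1 - g)^(2*m-1) * Real.exp ((-1 - g) * (2 * tf))) * Real.exp (2*g*tf)
            = (1+g)^(2*m-1) * (Real.exp (2*(tf-t₀)*g + -2*t₀) - Real.exp (-2*tf))
            + (Real.exp (-2*t₀) - Real.exp (-2*tf)) := by
          rw [hx]
          linear_combination (Real.exp (-2*t₀) - Real.exp (-2*tf)) * i3
            + (1+g)^(2*m-1) * i4 - (1+g)^(2*m-1) * i5
        rw [chi17, ← e1, ← e2, mul_div_mul_right _ _ (Real.exp_ne_zero (2*g*tf))]
      rw [hpt]
      exact tendsto_const_nhds.div_atTop hden
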